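/- Let X be a metric space with an accumulation point. Then there exists a sequence x : ω → X such that Λ_x(FS) ≠ Γ_x(FS). -/

import Mathlib

open Set Filter Topology

/-- `FS(D)`: the set of finite sums of distinct elements of `D`. -/
def FS (D : Set ℕ) : Set ℕ :=
  {n | ∃ α : Finset ℕ, ↑α ⊆ D ∧ α.Nonempty ∧ ∑ i ∈ α, i = n}

variable {X : Type*}

/-- `η` is an `FS`-limit point of the sequence `x : ω → X`. -/
def IsFSLimitPoint [TopologicalSpace X] (x : ℕ → X) (η : X) : Prop :=
  ∃ D : Set ℕ, D.Infinite ∧ ∀ U ∈ 𝓝 η, ∃ K : Set ℕ, K.Finite ∧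
    ∀ n ∈ FS (D \ K), x n ∈ U

/-- `η` is an `FS`-cluster point of the sequence `x : ω → X`. -/
def IsFSClusterPoint [TopologicalSpace X] (x : ℕ → X) (η : X) : Prop :=
  ∀ U ∈ 𝓝 η, ∃ D : Set ℕ, D.Infinite ∧ FS D ⊆ {n | x n ∈ U}

namespace FSAux

lemma sum_two_pow_lt : ∀ (s : Finset ℕ) (a : ℕ), (∀ i ∈ s, i < a) → ∑ i ∈ s, 2 ^ i < 2 ^ a := by
  intro s
  induction s using Finset.induction_on_max with
  | empty => intro a _; positivity
  | insert b s hlt ih =>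
    intro a ha
    have hbs : b ∉ s := fun hb => lt_irrefl b (hlt b hb)
    rw [Finset.sum_insert hbs]
    have h1 : ∑ i ∈ s, 2 ^ i < 2 ^ b := ih b hlt
    have hb : b < a := ha b (Finset.mem_insert_self _ _)
    calc 2 ^ b + ∑ i ∈ s, 2 ^ i < 2 ^ b + 2 ^ b := by omega
      _ = 2 ^ (b + 1) := by ring
      _ ≤ 2 ^ a := Nat.pow_le_pow_right (by norm_num) hb

lemma testBit_sum_two_pow : ∀ (s : Finset ℕ) (j : ℕ),
    ((∑ i ∈ s, 2 ^ i).testBit j = true) ↔ j ∈ s := by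
  intro s
  induction s using Finset.induction_on_max with
  | empty => simp
  | insert b s hlt ih =>
    intro j
    have hbs : b ∉ s := fun hb => lt_irrefl b (hlt b hb)
    rw [Finset.sum_insert hbs]
    have hcarry := Nat.testBit_two_pow_mul_add 1 (sum_two_pow_lt s b hlt) j
    rw [mul_one] at hcarry
    rw [hcarry]
    by_cases hj : j < b
    · rw [if_pos hj, ih j, Finset.mem_insert]
      constructor
      · exact Or.inr
      · rintro (rfl | h); · omega
        · exact h
    · rw [if_neg hj]
      rw [Nat.testBit_one_eq_true_iff_self_eq_zero, Finset.mem_insert]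
      constructor
      · intro h; left; omega
      · rintro (rfl | h); · omega
        · exact absurd (hlt j h) hj

lemma sum_two_pow_inj {s t : Finset ℕ} (h : ∑ i ∈ s, 2 ^ i = ∑ i ∈ t, 2 ^ i) : s = t :=
  Finset.ext fun j => by rw [← testBit_sum_two_pow s j, ← testBit_sum_two_pow t j, h]

/-- `n` is a valid "generation `k`" number: a nonempty sum of distinct powers `2 ^ (pair k i)`. -/
def Valid (k n : ℕ) : Prop :=
  ∃ s : Finset ℕ, s.Nonempty ∧ (∀ j ∈ s, ∃ i, j = Nat.pair k i) ∧ n = ∑ j ∈ s, 2 ^ j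

lemma valid_unique {k k' n : ℕ} (h : Valid k n) (h' : Valid k' n) : k = k' := by
  obtain ⟨s, hs, hsk, rfl⟩ := h
  obtain ⟨t, _, htk, hsum⟩ := h'
  have hst : s = t := sum_two_pow_inj hsum
  obtain ⟨j, hj⟩ := hs
  obtain ⟨i, rfl⟩ := hsk j hj
  obtain ⟨i', he⟩ := htk _ (hst ▸ hj)
  exact (Nat.pair_eq_pair.1 he).1

lemma valid_sum {k : ℕ} {α : Finset ℕ} (hne : α.Nonempty)
    (hα : ∀ d ∈ α, ∃ i, d = 2 ^ Nat.pair k i) : Valid k (∑ d ∈ α, d) := by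
  refine ⟨α.image (Nat.log 2), hne.image _, ?_, ?_⟩
  · intro j hj
    obtain ⟨d, hd, rfl⟩ := Finset.mem_image.1 hj
    obtain ⟨i, rfl⟩ := hα d hd
    exact ⟨i, Nat.log_pow (by norm_num) _⟩
  · rw [Finset.sum_image]
    · refine (Finset.sum_congr rfl fun d hd => ?_).symm
      obtain ⟨i, rfl⟩ := hα d hd
      rw [Nat.log_pow (by norm_num)]
    · intro a ha b hb hab
      obtain ⟨i, rfl⟩ := hα a ha
      obtain ⟨i', rfl⟩ := hα b hb
      rw [Nat.log_pow (by norm_num), Nat.log_pow (by norm_num)] at hab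
      rw [hab]

lemma valid_add_not {k l a b : ℕ} (ha : Valid k a) (hb : Valid l b) (hkl : k ≠ l) :
    ¬ ∃ m, Valid m (a + b) := by
  obtain ⟨s, hs, hsk, rfl⟩ := ha
  obtain ⟨t, ht, htk, rfl⟩ := hb
  have hdisj : Disjoint s t := by
    rw [Finset.disjoint_left]
    intro j hjs hjt
    obtain ⟨i, rfl⟩ := hsk j hjs
    obtain ⟨i', he⟩ := htk _ hjt
    exact hkl (Nat.pair_eq_pair.1 he).1
  rintro ⟨m, u, hu, hum, hsum⟩
  rw [← Finset.sum_union hdisj] at hsum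
  have hst : s ∪ t = u := sum_two_pow_inj hsum
  obtain ⟨j1, hj1⟩ := hs
  obtain ⟨j2, hj2⟩ := ht
  obtain ⟨i1, rfl⟩ := hsk j1 hj1
  obtain ⟨i2, rfl⟩ := htk j2 hj2
  obtain ⟨i1', he1⟩ := hum _ (hst ▸ Finset.mem_union_left _ hj1)
  obtain ⟨i2', he2⟩ := hum _ (hst ▸ Finset.mem_union_right _ hj2)
  exact hkl (((Nat.pair_eq_pair.1 he1).1).trans ((Nat.pair_eq_pair.1 he2).1).symm)

open scoped Classical

/-- The sequence: `z (k+1)` on valid generation-`k` numbers, `z 0` elsewhere. -/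
noncomputable def xseq (z : ℕ → X) : ℕ → X := fun n =>
  if h : ∃ k, Valid k n then z (h.choose + 1) else z 0

lemma xseq_eq_valid (z : ℕ → X) {k n : ℕ} (hk : Valid k n) : xseq z n = z (k + 1) := by
  have h : ∃ k, Valid k n := ⟨k, hk⟩
  have h2 := valid_unique h.choose_spec hk
  simp only [xseq, dif_pos h, h2]

lemma xseq_eq_invalid (z : ℕ → X) {n : ℕ} (h : ¬ ∃ k, Valid k n) : xseq z n = z 0 := by
  simp only [xseq, dif_neg h]

end FSAux

open FSAux in
theorem exists_seq_lambda_fs_ne_gamma_fs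
    [MetricSpace X] (hacc : ∃ p : X, (𝓝[≠] p).NeBot) :
    ∃ x : ℕ → X, {η | IsFSLimitPoint x η} ≠ {η | IsFSClusterPoint x η} := by
  obtain ⟨p, hp⟩ := hacc
  -- nearby points
  have key : ∀ ε : ℝ, 0 < ε → ∃ y : X, y ≠ p ∧ dist y p < ε := by
    intro ε hε
    have hb : Metric.ball p ε ∈ 𝓝[≠] p :=
      mem_nhdsWithin_of_mem_nhds (Metric.ball_mem_nhds _ hε)
    have hmem : Metric.ball p ε ∩ {p}ᶜ ∈ 𝓝[≠] p := inter_mem hb self_mem_nhdsWithin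
    obtain ⟨y, hy⟩ := Filter.nonempty_of_mem hmem
    exact ⟨y, hy.2, Metric.mem_ball.1 hy.1⟩
  -- recursive sequence of points approaching p, with halving distances
  have keyf : ∀ w : {y : X // y ≠ p}, ∃ y : X, y ≠ p ∧ dist y p < dist w.1 p / 2 := by
    intro w
    exact key _ (by  have := dist_pos.2 w.2; linarith)
  choose f hf1 hf2 using keyf
  obtain ⟨y0, hy0, _⟩ := key 1 one_pos
  let g : {y : X // y ≠ p} → {y : X // y ≠ p} := fun w => ⟨f w, hf1 w⟩
  let z : ℕ → X := fun k => (g^[k] ⟨y0, hy0⟩).1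
  have hzne : ∀ k, z k ≠ p := fun k => (g^[k] ⟨y0, hy0⟩).2
  have hzpos : ∀ k, 0 < dist (z k) p := fun k => dist_pos.2 (hzne k)
  have hhalf : ∀ k, dist (z (k + 1)) p < dist (z k) p / 2 := by
    intro k
    have : z (k + 1) = f (g^[k] ⟨y0, hy0⟩) := by
      show (g^[k+1] ⟨y0, hy0⟩).1 = _
      rw [Function.iterate_succ_apply']
    rw [this]
    exact hf2 (g^[k] ⟨y0, hy0⟩)
  have hanti : Antitone fun k => dist (z k) p := by
    apply antitone_nat_of_succ_le
    intro k
    have h1 := hhalf k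
    have h2 := hzpos k
    linarith
  have hbound : ∀ k, dist (z k) p ≤ dist (z 0) p / 2 ^ k := by
    intro k
    induction k with
    | zero => simp
    | succ k ih =>
      have h1 := hhalf k
      have he : dist (z 0) p / 2 ^ (k+1) = dist (z 0) p / 2 ^ k / 2 := by
        rw [pow_succ]; ring
      rw [he]
      linarith
  have htend : ∀ ε : ℝ, 0 < ε → ∃ k, dist (z k) p < ε := by
    intro ε hε
    obtain ⟨n, hn⟩ := pow_unbounded_of_one_lt (dist (z 0) p / ε) (by norm_num : (1:ℝ) < 2)
    refine ⟨n, lt_of_le_of_lt (hbound n) ?_⟩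
    rw [div_lt_iff₀ (by positivity)]
    rw [div_lt_iff₀ hε] at hn
    linarith
  refine ⟨xseq z, fun heq => ?_⟩
  -- p is an FS-cluster point
  have hcluster : IsFSClusterPoint (xseq z) p := by
    intro U hU
    obtain ⟨ε, hε, hball⟩ := Metric.mem_nhds_iff.1 hU
    obtain ⟨k, hk⟩ := htend ε hε
    refine ⟨Set.range (fun i => 2 ^ Nat.pair k i), ?_, ?_⟩
    · apply Set.infinite_range_of_injective
      intro i j hij
      exact (Nat.pair_eq_pair.1 (Nat.pow_right_injective (le_refl 2) hij)).2
    · rintro n ⟨α, hα, hne, rfl⟩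
      have hval : Valid k (∑ d ∈ α, d) := valid_sum hne fun d hd => by
        obtain ⟨i, hi⟩ := hα hd; exact ⟨i, hi.symm⟩
      show xseq z _ ∈ U
      rw [xseq_eq_valid z hval]
      apply hball
      exact Metric.mem_ball.2 (lt_of_le_of_lt (hanti (Nat.le_succ k)) hk)
  -- p is not an FS-limit point
  have hnotlimit : ¬ IsFSLimitPoint (xseq z) p := by
    rintro ⟨D, hD, hL⟩
    obtain ⟨K0, hK0fin, hK0⟩ := hL (Metric.ball p (dist (z 0) p))
      (Metric.ball_mem_nhds _ (hzpos 0))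
    have hvalid : ∀ d, d ∈ D \ K0 → ∃ k, Valid k d := by
      intro d hd
      by_contra h
      have hx : xseq z d = z 0 := xseq_eq_invalid z h
      have hdFS : d ∈ FS (D \ K0) :=
        ⟨{d}, by simpa using hd, Finset.singleton_nonempty d, Finset.sum_singleton _ _⟩
      have := hK0 d hdFS
      rw [hx] at this
      exact lt_irrefl _ (Metric.mem_ball.1 this)
    obtain ⟨d0, hd0⟩ := (hD.diff hK0fin).nonempty
    obtain ⟨k0, hk0⟩ := hvalid d0 hd0
    obtain ⟨K1, hK1fin, hK1⟩ := hL (Metric.ball p (dist (z (k0 + 1)) p))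
      (Metric.ball_mem_nhds _ (hzpos _))
    obtain ⟨d1, hd1⟩ := (hD.diff (hK0fin.union hK1fin)).nonempty
    have hd1D : d1 ∈ D \ K0 := ⟨hd1.1, fun h => hd1.2 (Or.inl h)⟩
    obtain ⟨k1, hk1⟩ := hvalid d1 hd1D
    obtain ⟨K2, hK2fin, hK2⟩ := hL (Metric.ball p (dist (z (k1 + 1)) p))
      (Metric.ball_mem_nhds _ (hzpos _))
    obtain ⟨d2, hd2⟩ := (hD.diff (((hK0fin.union hK1fin).union hK2fin).union
      (Set.finite_singleton d1))).nonempty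
    have hd2D : d2 ∈ D \ K0 := ⟨hd2.1, fun h => hd2.2 (Or.inl (Or.inl (Or.inl h)))⟩
    obtain ⟨k2, hk2⟩ := hvalid d2 hd2D
    -- d2 ∈ FS (D \ K2) forces k2 ≠ k1
    have hd2FS : d2 ∈ FS (D \ K2) := by
      refine ⟨{d2}, ?_, Finset.singleton_nonempty d2, Finset.sum_singleton _ _⟩
      simp only [Finset.coe_singleton, Set.singleton_subset_iff]
      exact ⟨hd2.1, fun h => hd2.2 (Or.inl (Or.inr h))⟩
    have hk2ne : k2 ≠ k1 := by
      intro h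
      have := hK2 d2 hd2FS
      rw [xseq_eq_valid z hk2, h] at this
      exact lt_irrefl _ (Metric.mem_ball.1 this)
    have hd12 : d1 ≠ d2 := fun h => hd2.2 (Or.inr (by rw [h.symm]; rfl))
    -- the sum d1 + d2 is invalid
    have hinv : ¬ ∃ m, Valid m (d1 + d2) := valid_add_not hk1 hk2 (Ne.symm hk2ne)
    have hsumFS : d1 + d2 ∈ FS (D \ K1) := by
      refine ⟨{d1, d2}, ?_, ⟨d1, Finset.mem_insert_self _ _⟩, Finset.sum_pair hd12⟩
      intro a ha
      simp only [Finset.coe_insert, Finset.coe_singleton, Set.mem_insert_iff,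
        Set.mem_singleton_iff] at ha
      rcases ha with rfl | rfl
      · exact ⟨hd1.1, fun h => hd1.2 (Or.inr h)⟩
      · exact ⟨hd2.1, fun h => hd2.2 (Or.inl (Or.inl (Or.inr h)))⟩
    have := hK1 _ hsumFS
    rw [xseq_eq_invalid z hinv] at this
    have hlt := Metric.mem_ball.1 this
    have hle : dist (z (k0 + 1)) p ≤ dist (z 0) p := hanti (Nat.zero_le _)
    linarith
  have hmem : p ∈ {η | IsFSClusterPoint (xseq z) η} := hcluster
  rw [← heq] at hmem
  exact hnotlimit hmem
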